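/- Let f: [1, ∞) → ℝ be given by f(τ) = C₂·δ·τ^m·e^{aτ} + C₁·τ^m·e^{-bτ} with constants C₁, C₂ ≥ 0, a ≥ 0, b > 0, m ∈ ℕ, 0 < δ < 1. Then inf over τ ≥ 1 of f(τ) ≤ (C₁ + C₂)·((ln(1/δ))/(a+b))^m·δ^{b/(a+b)} whenever ln(1/δ) ≥ a + b. -/

import Mathlib

theorem stmt_12 (C₁ C₂ a b δ : ℝ) (m : ℕ)
    (hC₁ : 0 ≤ C₁) (hC₂ : 0 ≤ C₂) (ha : 0 ≤ a) (hb : 0 < b)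
    (hδ0 : 0 < δ) (hδ1 : δ < 1)
    (hlog : Real.log (1 / δ) ≥ a + b) :
    sInf ((fun τ : ℝ => C₂ * δ * τ ^ m * Real.exp (a * τ) + C₁ * τ ^ m * Real.exp (-b * τ)) ''
        Set.Ici 1)
      ≤ (C₁ + C₂) * (Real.log (1 / δ) / (a + b)) ^ m * δ ^ (b / (a + b)) := by
  have hab : 0 < a + b := by linarith
  set L := Real.log (1 / δ) with hL
  set τ := L / (a + b) with hτ
  have hτ1 : (1 : ℝ) ≤ τ := (le_div_iff₀ hab).mpr (by linarith)
  have hLneg : L = -Real.log δ := by rw [hL, one_div, Real.log_inv]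
  have h1 : Real.exp (-b * τ) = δ ^ (b / (a + b)) := by
    rw [Real.rpow_def_of_pos hδ0]
    congr 1
    rw [hτ, hLneg]
    field_simp
  have h2 : δ * Real.exp (a * τ) = δ ^ (b / (a + b)) := by
    rw [Real.rpow_def_of_pos hδ0]
    nth_rewrite 1 [← Real.exp_log hδ0]
    rw [← Real.exp_add]
    congr 1
    rw [hτ, hLneg]
    field_simp
    ring
  apply csInf_le
  · refine ⟨0, ?_⟩
    rintro x ⟨t, ht, rfl⟩
    have ht0 : (0 : ℝ) ≤ t := le_trans zero_le_one ht
    have := Real.exp_pos (a * t)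
    have := Real.exp_pos (-b * t)
    positivity
  · exact ⟨τ, hτ1, by
      simp only []
      rw [h1]
      have : C₂ * δ * τ ^ m * Real.exp (a * τ) = C₂ * τ ^ m * (δ * Real.exp (a * τ)) := by ring
      rw [this, h2]; ring⟩
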